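/- Let g be a Lie algebra of endomorphisms of a graded-commutative ring A such that every element of g acts by derivations and preserves the grading-degree-0 pairing ⟨x, y⟩ = (xy)_{top} given by the top-degree component of the product. Suppose A is generated in degree 2 with A_2 = H, and that for all D ∈ g and all α ∈ H, the Fujiki-type relation ⟨α^n, α^n⟩ = c·Q(α,α)^n holds for a nondegenerate quadratic form Q on H and constant c ≠ 0. Then every D ∈ g preserving ⟨-,-⟩ and acting by derivations satisfies Q(Dα, α) = 0 for all α ∈ H, i.e. g restricted to H lies in so(H, Q). -/
import Mathlib

open Polynomial Finset

private lemma stepA18 {A : Type*} [CommRing A] [Algebra ℚ A]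
    (𝒜 : ℕ → Submodule ℚ A) (n : ℕ) (hn : 1 ≤ n)
    (tr : A →ₗ[ℚ] ℚ)
    (Q : LinearMap.BilinForm ℚ A) (hQsymm : ∀ a b, Q a b = Q b a)
    (c : ℚ) (hc : c ≠ 0)
    (hFujiki : ∀ α ∈ 𝒜 2, c * (Q α α) ^ n = tr (α ^ (2 * n)))
    (D : Derivation ℚ A A)
    (hDdeg : ∀ a ∈ 𝒜 2, D a ∈ 𝒜 2)
    (hDtr : ∀ a : A, tr (D a) = 0) :
    ∀ α ∈ 𝒜 2, Q α α ≠ 0 → Q (D α) α = 0 := by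
  intro α hα hq0
  set β := D α with hβdef
  have hβ : β ∈ 𝒜 2 := hDdeg α hα
  -- trace of derivative of α^(2n) is zero
  have hτ : tr (α ^ (2 * n - 1) * β) = 0 := by
    have h1 : tr (D (α ^ (2 * n))) = 0 := hDtr _
    rw [Derivation.leibniz_pow] at h1
    have h2n : ((2 * n : ℕ) : ℚ) ≠ 0 := by
      simp only [ne_eq, Nat.cast_eq_zero]; omega
    rw [smul_eq_mul, map_nsmul, nsmul_eq_mul] at h1
    exact (mul_eq_zero.mp h1).resolve_left h2n
  -- the two polynomials
  set P1 : Polynomial ℚ :=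
    ∑ k ∈ range (2 * n + 1),
      C (((2 * n).choose k : ℚ) * tr (α ^ k * β ^ (2 * n - k))) * X ^ (2 * n - k) with hP1
  set S : Polynomial ℚ := C (Q α α) + C (2 * Q α β) * X + C (Q β β) * X ^ 2 with hS
  set P2 : Polynomial ℚ := C c * S ^ n with hP2
  have heval : ∀ t : ℚ, P1.eval t = P2.eval t := by
    intro t
    have hmem : α + t • β ∈ 𝒜 2 := (𝒜 2).add_mem hα ((𝒜 2).smul_mem t hβ)
    have hQval : Q (α + t • β) (α + t • β) = Q α α + (2 * Q α β) * t + (Q β β) * t ^ 2 := by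
      simp only [map_add, map_smul, LinearMap.add_apply, LinearMap.smul_apply, smul_eq_mul,
        hQsymm β α]
      ring
    have hfu := hFujiki (α + t • β) hmem
    have hL : tr ((α + t • β) ^ (2 * n)) =
        ∑ k ∈ range (2 * n + 1),
          ((2 * n).choose k : ℚ) * tr (α ^ k * β ^ (2 * n - k)) * t ^ (2 * n - k) := by
      rw [add_pow, map_sum]
      refine Finset.sum_congr rfl fun k _ => ?_
      have h : α ^ k * (t • β) ^ (2 * n - k) * (((2 * n).choose k : ℕ) : A)
          = ((((2 * n).choose k : ℕ) : ℚ) * t ^ (2 * n - k)) • (α ^ k * β ^ (2 * n - k)) := by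
        simp only [Algebra.smul_def, map_mul, map_pow, map_natCast]
        ring
      rw [h, map_smul, smul_eq_mul]
      ring
    have hP1e : P1.eval t =
        ∑ k ∈ range (2 * n + 1),
          ((2 * n).choose k : ℚ) * tr (α ^ k * β ^ (2 * n - k)) * t ^ (2 * n - k) := by
      rw [hP1, eval_finset_sum]
      refine Finset.sum_congr rfl fun k _ => ?_
      simp only [eval_mul, eval_C, eval_pow, eval_X]
    have hP2e : P2.eval t = c * (Q α α + (2 * Q α β) * t + (Q β β) * t ^ 2) ^ n := by
      simp [hP2, hS]
    rw [hP1e, hP2e, ← hL, ← hQval, hfu]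
  have hPP : P1 = P2 := Polynomial.funext heval
  -- coefficient 1 of P1
  have hc1P1 : P1.coeff 1 = ((2 * n : ℕ) : ℚ) * tr (α ^ (2 * n - 1) * β) := by
    rw [hP1, Polynomial.finset_sum_coeff]
    rw [Finset.sum_eq_single (2 * n - 1)]
    · have h1 : 2 * n - (2 * n - 1) = 1 := by omega
      have h2 : (2 * n).choose (2 * n - 1) = 2 * n := by
        rw [Nat.choose_symm (by omega : 1 ≤ 2 * n), Nat.choose_one_right]
      rw [h1, h2, coeff_C_mul, coeff_X_pow, if_pos rfl, pow_one, mul_one]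
    · intro k hk hne
      rw [coeff_C_mul, coeff_X_pow, if_neg, mul_zero]
      simp only [Finset.mem_range] at hk
      omega
    · intro h
      exact absurd (Finset.mem_range.mpr (by omega)) h
  -- coefficient 1 of P2
  have hc1P2 : P2.coeff 1 = c * (n * (Q α α) ^ (n - 1) * (2 * Q α β)) := by
    have hd : P2.coeff 1 = (Polynomial.derivative P2).coeff 0 := by
      rw [Polynomial.coeff_derivative]; ring
    rw [hd, Polynomial.coeff_zero_eq_eval_zero, hP2, Polynomial.derivative_C_mul,
      Polynomial.derivative_pow]
    simp [hS]
  have hkey : ((2 * n : ℕ) : ℚ) * tr (α ^ (2 * n - 1) * β) =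
      c * (n * (Q α α) ^ (n - 1) * (2 * Q α β)) := by
    rw [← hc1P1, ← hc1P2, hPP]
  rw [hτ, mul_zero] at hkey
  have hn0 : (n : ℚ) ≠ 0 := by simp only [ne_eq, Nat.cast_eq_zero]; omega
  have hq0' : (Q α α) ^ (n - 1) ≠ 0 := pow_ne_zero _ hq0
  have : Q α β = 0 := by
    have h1 : (n : ℚ) * (Q α α) ^ (n - 1) * (2 * Q α β) = 0 :=
      (mul_eq_zero.mp hkey.symm).resolve_left hc
    rcases mul_eq_zero.mp h1 with h2 | h2
    · rcases mul_eq_zero.mp h2 with h3 | h3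
      · exact absurd h3 hn0
      · exact absurd h3 hq0'
    · linarith
  rw [hQsymm]
  exact this

theorem stmt18 {A : Type*} [CommRing A] [Algebra ℚ A] [Module.Finite ℚ A]
    (𝒜 : ℕ → Submodule ℚ A) (hgraded : DirectSum.IsInternal 𝒜)
    (hmul : ∀ k l : ℕ, ∀ a ∈ 𝒜 k, ∀ b ∈ 𝒜 l, a * b ∈ 𝒜 (k + l))
    (n : ℕ) (hn : 1 ≤ n)
    (htop : Module.finrank ℚ (𝒜 (4 * n)) = 1)
    (hbound : ∀ k : ℕ, 4 * n < k → 𝒜 k = ⊥)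
    (hgen : Algebra.adjoin ℚ ((𝒜 2 : Submodule ℚ A) : Set A) = ⊤)
    (tr : A →ₗ[ℚ] ℚ)
    (htr : ∀ k : ℕ, k ≠ 4 * n → ∀ a ∈ 𝒜 k, tr a = 0)
    (htrtop : ∀ a ∈ 𝒜 (4 * n), tr a = 0 → a = 0)
    (Q : LinearMap.BilinForm ℚ A) (hQsymm : ∀ a b, Q a b = Q b a)
    (hQnd : ∀ α ∈ 𝒜 2, (∀ β ∈ 𝒜 2, Q α β = 0) → α = 0)
    (c : ℚ) (hc : c ≠ 0)
    (hFujiki : ∀ α ∈ 𝒜 2, c * (Q α α) ^ n = tr (α ^ (2 * n)))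
    (D : Derivation ℚ A A)
    (hDdeg : ∀ k : ℕ, ∀ a ∈ 𝒜 k, D a ∈ 𝒜 k)
    (hDtr : ∀ a : A, tr (D a) = 0) :
    ∀ α ∈ 𝒜 2, Q (D α) α = 0 := by
  have hA := stepA18 𝒜 n hn tr Q hQsymm c hc hFujiki D (hDdeg 2) hDtr
  intro α hα
  by_cases hex : ∃ β ∈ 𝒜 2, Q β β ≠ 0
  · obtain ⟨β, hβ, hβQ⟩ := hex
    set R : Polynomial ℚ := C (Q (D α) α) + C (Q (D α) β + Q (D β) α) * X
        + C (Q (D β) β) * X ^ 2 with hR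
    set S : Polynomial ℚ := C (Q α α) + C (2 * Q α β) * X + C (Q β β) * X ^ 2 with hS
    have hRS : ∀ t : ℚ, (R * S).eval t = 0 := by
      intro t
      rw [Polynomial.eval_mul]
      by_cases hSt : S.eval t = 0
      · rw [hSt, mul_zero]
      · have hmem : α + t • β ∈ 𝒜 2 := (𝒜 2).add_mem hα ((𝒜 2).smul_mem t hβ)
        have hQval : Q (α + t • β) (α + t • β) = S.eval t := by
          simp only [hS, map_add, map_smul, LinearMap.add_apply, LinearMap.smul_apply,
            smul_eq_mul, hQsymm β α, eval_add, eval_mul, eval_C, eval_X, eval_pow]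
          ring
        have h0 : Q (D (α + t • β)) (α + t • β) = 0 := by
          apply hA _ hmem
          rw [hQval]; exact hSt
        have hDadd : D (α + t • β) = D α + t • D β := by
          rw [map_add, Derivation.map_smul]
        rw [hDadd] at h0
        have hRt : R.eval t = 0 := by
          rw [← h0]
          simp only [hR, map_add, map_smul, LinearMap.add_apply, LinearMap.smul_apply,
            smul_eq_mul, eval_add, eval_mul, eval_C, eval_X, eval_pow]
          ring
        rw [hRt, zero_mul]
    have hRS0 : R * S = 0 := Polynomial.funext (by simpa using hRS)
    have hSne : S ≠ 0 := by
      intro h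
      have : S.coeff 2 = 0 := by rw [h]; simp
      rw [hS] at this
      simp [coeff_add, coeff_C_mul, coeff_X_pow, coeff_C] at this
      exact hβQ this
    have hR0 : R = 0 := by
      rcases mul_eq_zero.mp hRS0 with h | h
      · exact h
      · exact absurd h hSne
    have : R.coeff 0 = 0 := by rw [hR0]; simp
    rw [hR] at this
    simpa [coeff_add, coeff_C_mul, coeff_X_pow, coeff_C] using this
  · push_neg at hex
    have hall : ∀ β ∈ 𝒜 2, ∀ γ ∈ 𝒜 2, Q β γ = 0 := by
      intro β hβ γ hγ
      have h1 := hex (β + γ) ((𝒜 2).add_mem hβ hγ)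
      have h2 := hex β hβ
      have h3 := hex γ hγ
      simp only [map_add, LinearMap.add_apply] at h1
      rw [h2, h3, hQsymm γ β] at h1
      linarith
    have hα0 : α = 0 := hQnd α hα (hall α hα)
    rw [hα0]
    simp
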